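/- Let J₁ = −1/2, J₂ = (1+√2)/2, J₃ = √2/2. For ε ∈ ℝ and (u,v) ∈ ℝ² define w(u,v,ε) := (ε − J₁u − J₂v)/J₃, and set I(ε) := ∫_{u=−1}^{1} ∫_{{v ∈ ℝ : Q(u,v,w(u,v,ε)) > 0}} Q(u, v, w(u,v,ε))^{−1/2} dv du. Then I(ε) is finite and takes the same value for all ε in the interval [0, 1]; i.e., the density of states has a plateau on [0,1]. -/

import Mathlib

open MeasureTheory

/-- `Q(u,v,w) = 1 − u² − v² − w² + 2uvw`. -/
def Qfun (u v w : ℝ) : ℝ := 1 - u ^ 2 - v ^ 2 - w ^ 2 + 2 * u * v * w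

/-- For the standard couplings `J₁ = −1/2`, `J₂ = (1+√2)/2`, `J₃ = √2/2`, the value of `w`
on the energy plane `J₁u + J₂v + J₃w = ε`. -/
noncomputable def wPlane (u v ε : ℝ) : ℝ :=
  (ε - (-1 / 2) * u - ((1 + Real.sqrt 2) / 2) * v) / (Real.sqrt 2 / 2)

/-- The (unnormalized) density of states at energy `ε`:
`I(ε) = ∫_{u=−1}^{1} ∫_{{v : Q(u,v,w(u,v,ε)) > 0}} Q(u,v,w(u,v,ε))^{−1/2} dv du`. -/
noncomputable def dosIntegral (ε : ℝ) : ℝ :=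
  ∫ u in Set.Icc (-1 : ℝ) 1,
    ∫ v in {v : ℝ | 0 < Qfun u v (wPlane u v ε)}, 1 / Real.sqrt (Qfun u v (wPlane u v ε))

/-! ### Auxiliary algebra: on the energy plane, `Q` is a downward parabola in `v`. -/

noncomputable def sB : ℝ := -(1 + Real.sqrt 2) / Real.sqrt 2
noncomputable def sA (u ε : ℝ) : ℝ := Real.sqrt 2 * ε + u / Real.sqrt 2
noncomputable def kk (u : ℝ) : ℝ := 1 + sB ^ 2 - 2 * u * sB
noncomputable def bb (u ε : ℝ) : ℝ := 2 * sA u ε * (u - sB)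
noncomputable def aa (u ε : ℝ) : ℝ := 1 - u ^ 2 - (sA u ε) ^ 2
noncomputable def mm (u ε : ℝ) : ℝ := bb u ε / (2 * kk u)
noncomputable def DD (u ε : ℝ) : ℝ := aa u ε + (bb u ε) ^ 2 / (4 * kk u)

lemma s2_sq : Real.sqrt 2 ^ 2 = 2 := Real.sq_sqrt (by norm_num)
lemma s2_pos : (0:ℝ) < Real.sqrt 2 := Real.sqrt_pos.2 (by norm_num)
lemma s2_gt_one : (1:ℝ) < Real.sqrt 2 := by nlinarith [s2_sq, s2_pos]

lemma kk_eq (u : ℝ) : kk u = (5 + 2*Real.sqrt 2)/2 + (2 + Real.sqrt 2)*u := by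
  have hs := s2_sq
  have hp := s2_pos.ne'
  unfold kk sB
  field_simp
  linear_combination (-2*Real.sqrt 2 - 2*Real.sqrt 2*u - 1) * hs

lemma sA_sq (u ε : ℝ) : (sA u ε)^2 = 2*ε^2 + 2*ε*u + u^2/2 := by
  have hs := s2_sq
  have hp := s2_pos.ne'
  unfold sA
  field_simp
  linear_combination (2*ε^2*Real.sqrt 2^2 - u^2) * hs

lemma kk_pos {u : ℝ} (h1 : -1 ≤ u) : 0 < kk u := by
  rw [kk_eq]
  nlinarith [s2_gt_one]

lemma wPlane_eq (u v ε : ℝ) : wPlane u v ε = sA u ε + sB * v := by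
  have hs := s2_sq
  have hp := s2_pos.ne'
  unfold wPlane sA sB
  field_simp
  linear_combination (-ε) * hs

lemma Q_eq (u v ε : ℝ) (hk : kk u ≠ 0) :
    Qfun u v (wPlane u v ε) = DD u ε - kk u * (v - mm u ε)^2 := by
  rw [wPlane_eq]
  have hQ : Qfun u v (sA u ε + sB * v) = -(kk u) * v^2 + bb u ε * v + aa u ε := by
    unfold Qfun kk bb aa
    ring
  rw [hQ]
  unfold DD mm
  field_simp
  ring

lemma DD_key (u ε : ℝ) (hk : kk u ≠ 0) :
    4 * kk u * DD u ε = 4 * (1 - u^2) * (kk u - (sA u ε)^2) := by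
  unfold DD aa bb
  field_simp
  unfold kk
  ring

lemma DD_pos {u ε : ℝ} (hu : u ∈ Set.Ioo (-1:ℝ) 1) (hε : ε ∈ Set.Icc (0:ℝ) 1) :
    0 < DD u ε := by
  have hk := kk_pos hu.1.le
  have hgap : 0 < kk u - (sA u ε)^2 := by
    rw [kk_eq, sA_sq]
    obtain ⟨hu1, hu2⟩ := hu
    obtain ⟨he1, he2⟩ := hε
    have hs := s2_gt_one
    have h4 : 0 < 4 + 2*Real.sqrt 2 - 2*ε^2 - 2*ε := by nlinarith
    nlinarith [mul_pos (show (0:ℝ) < 1 - u by linarith) (show (0:ℝ) < 1 + u by linarith),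
      mul_nonneg (mul_nonneg (show (0:ℝ) ≤ 1 - u by linarith) he1)
        (show (0:ℝ) ≤ 1 - ε by linarith),
      mul_pos (show (0:ℝ) < 1 + u by linarith) h4]
  have hkey := DD_key u ε hk.ne'
  have h1u : 0 < 1 - u^2 := by nlinarith [hu.1, hu.2]
  nlinarith [mul_pos (mul_pos (show (0:ℝ) < 4 by norm_num) h1u) hgap]

/-! ### The key computation: integral of `1/√(D − k(v−m)²)` over its positivity set. -/

open Real Set in
lemma core (k D m : ℝ) (hk : 0 < k) (hD : 0 < D) :
    IntegrableOn (fun v => 1 / Real.sqrt (D - k*(v-m)^2)) {v | 0 < D - k*(v-m)^2} ∧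
    ∫ v in {v : ℝ | 0 < D - k*(v-m)^2}, 1 / Real.sqrt (D - k*(v-m)^2)
      = π / Real.sqrt k := by
  set r := Real.sqrt (D/k) with hrdef
  have hDk : 0 < D / k := div_pos hD hk
  have hr : 0 < r := Real.sqrt_pos.2 hDk
  have hr2 : k * r^2 = D := by
    rw [hrdef, Real.sq_sqrt hDk.le]; field_simp
  have hsD : 0 < Real.sqrt D := Real.sqrt_pos.2 hD
  have hπ := Real.pi_pos
  have hset : {v : ℝ | 0 < D - k*(v-m)^2}
      = (fun θ => m + r * Real.sin θ) '' Ioo (-(π/2)) (π/2) := by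
    ext v
    simp only [mem_setOf_eq, mem_image]
    constructor
    · intro hv
      have h1 : (v - m)^2 < r^2 := by
        rw [hrdef, Real.sq_sqrt hDk.le, lt_div_iff₀ hk, mul_comm]
        linarith
      have h2 : |v - m| < r := by
        have := Real.sqrt_lt_sqrt (sq_nonneg (v-m)) h1
        rwa [Real.sqrt_sq_eq_abs, Real.sqrt_sq hr.le] at this
      rw [abs_lt] at h2
      have hx1 : -1 < (v - m)/r := by rw [lt_div_iff₀ hr]; linarith
      have hx2 : (v - m)/r < 1 := by rw [div_lt_iff₀ hr]; linarith
      refine ⟨Real.arcsin ((v - m)/r), ⟨?_, ?_⟩, ?_⟩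
      · exact Real.neg_pi_div_two_lt_arcsin.2 hx1
      · exact Real.arcsin_lt_pi_div_two.2 hx2
      · rw [Real.sin_arcsin hx1.le hx2.le]
        field_simp
        ring
    · rintro ⟨θ, hθ, rfl⟩
      have hs1 : Real.sin θ < 1 := by
        have := Real.strictMonoOn_sin ⟨hθ.1.le, hθ.2.le⟩
          (show (π/2) ∈ Icc (-(π/2)) (π/2) from ⟨by linarith, le_rfl⟩) hθ.2
        simpa using this
      have hs2 : -1 < Real.sin θ := by
        have := Real.strictMonoOn_sin
          (show (-(π/2)) ∈ Icc (-(π/2)) (π/2) from ⟨le_rfl, by linarith⟩)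
          ⟨hθ.1.le, hθ.2.le⟩ hθ.1
        simpa using this
      have he : k * (m + r * Real.sin θ - m)^2 = D * Real.sin θ ^ 2 := by
        rw [← hr2]; ring
      rw [he]
      nlinarith [mul_pos (show (0:ℝ) < 1 - Real.sin θ from by linarith)
        (show (0:ℝ) < 1 + Real.sin θ from by linarith), hD]
  have hderiv : ∀ θ ∈ Ioo (-(π/2)) (π/2),
      HasDerivWithinAt (fun θ => m + r * Real.sin θ) (r * Real.cos θ) (Ioo (-(π/2)) (π/2)) θ :=
    fun θ _ => (((Real.hasDerivAt_sin θ).const_mul r).const_add m).hasDerivWithinAt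
  have hinj : InjOn (fun θ => m + r * Real.sin θ) (Ioo (-(π/2)) (π/2)) := by
    intro x hx y hy hxy
    have h' : m + r * Real.sin x = m + r * Real.sin y := hxy
    have : Real.sin x = Real.sin y := mul_left_cancel₀ hr.ne' (by linarith)
    exact Real.injOn_sin ⟨hx.1.le, hx.2.le⟩ ⟨hy.1.le, hy.2.le⟩ this
  have heq : EqOn (fun θ => |r * Real.cos θ| •
      (fun v => 1 / Real.sqrt (D - k*(v-m)^2)) (m + r * Real.sin θ))
      (fun _ => r / Real.sqrt D) (Ioo (-(π/2)) (π/2)) := by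
    intro θ hθ
    have hc : 0 < Real.cos θ := Real.cos_pos_of_mem_Ioo hθ
    have he : D - k * (m + r * Real.sin θ - m)^2 = D * Real.cos θ ^ 2 := by
      have h1 : Real.sin θ ^ 2 + Real.cos θ ^ 2 = 1 := Real.sin_sq_add_cos_sq θ
      have : k * (m + r * Real.sin θ - m)^2 = D * Real.sin θ ^ 2 := by rw [← hr2]; ring
      nlinarith [this]
    simp only
    rw [he, Real.sqrt_mul hD.le, Real.sqrt_sq hc.le, abs_of_pos (mul_pos hr hc),
      smul_eq_mul]
    field_simp
  have hiff := integrableOn_image_iff_integrableOn_abs_deriv_smul measurableSet_Ioo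
      hderiv hinj (fun v => 1 / Real.sqrt (D - k*(v-m)^2))
  have hval := integral_image_eq_integral_abs_deriv_smul measurableSet_Ioo
      hderiv hinj (fun v => 1 / Real.sqrt (D - k*(v-m)^2))
  have hconstInt : IntegrableOn (fun _ : ℝ => r / Real.sqrt D) (Ioo (-(π/2)) (π/2)) :=
    integrableOn_const measure_Ioo_lt_top.ne
  constructor
  · rw [hset, hiff]
    exact hconstInt.congr_fun heq.symm measurableSet_Ioo
  · rw [hset, hval, setIntegral_congr_fun measurableSet_Ioo heq, setIntegral_const,
      Real.volume_real_Ioo, smul_eq_mul]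
    have : (π/2 - -(π/2)) = π := by ring
    rw [this, max_eq_left hπ.le]
    rw [hrdef, Real.sqrt_div hD.le]
    field_simp

/-! ### Inner integral: integrability and value. -/

lemma inner_integrable {u : ℝ} (hu : u ∈ Set.Icc (-1:ℝ) 1) (ε : ℝ) :
    IntegrableOn (fun v => 1 / Real.sqrt (Qfun u v (wPlane u v ε)))
      {v : ℝ | 0 < Qfun u v (wPlane u v ε)} := by
  have hk := kk_pos hu.1
  have hfun : (fun v => 1 / Real.sqrt (Qfun u v (wPlane u v ε)))
      = fun v => 1 / Real.sqrt (DD u ε - kk u * (v - mm u ε)^2) := by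
    funext v; rw [Q_eq u v ε hk.ne']
  have hsetQ : {v : ℝ | 0 < Qfun u v (wPlane u v ε)}
      = {v : ℝ | 0 < DD u ε - kk u * (v - mm u ε)^2} := by
    ext v; simp only [Set.mem_setOf_eq, Q_eq u v ε hk.ne']
  rw [hfun, hsetQ]
  rcases le_or_gt (DD u ε) 0 with hD | hD
  · have : {v : ℝ | 0 < DD u ε - kk u * (v - mm u ε)^2} = ∅ := by
      ext v
      simp only [Set.mem_setOf_eq, Set.mem_empty_iff_false, iff_false, not_lt]
      nlinarith [mul_nonneg hk.le (sq_nonneg (v - mm u ε))]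
    rw [this]
    exact integrableOn_empty
  · exact (core (kk u) (DD u ε) (mm u ε) hk hD).1

lemma inner_value {u ε : ℝ} (hu : u ∈ Set.Ioo (-1:ℝ) 1) (hε : ε ∈ Set.Icc (0:ℝ) 1) :
    ∫ v in {v : ℝ | 0 < Qfun u v (wPlane u v ε)}, 1 / Real.sqrt (Qfun u v (wPlane u v ε))
      = Real.pi / Real.sqrt (kk u) := by
  have hk := kk_pos hu.1.le
  have hD := DD_pos hu hε
  have hfun : (fun v => 1 / Real.sqrt (Qfun u v (wPlane u v ε)))
      = fun v => 1 / Real.sqrt (DD u ε - kk u * (v - mm u ε)^2) := by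
    funext v; rw [Q_eq u v ε hk.ne']
  have hsetQ : {v : ℝ | 0 < Qfun u v (wPlane u v ε)}
      = {v : ℝ | 0 < DD u ε - kk u * (v - mm u ε)^2} := by
    ext v; simp only [Set.mem_setOf_eq, Q_eq u v ε hk.ne']
  rw [hfun, hsetQ]
  exact (core (kk u) (DD u ε) (mm u ε) hk hD).2

/-! ### Outer integral. -/

noncomputable def Ffun (u : ℝ) : ℝ := Real.pi / Real.sqrt (kk u)

lemma Ffun_contOn : ContinuousOn Ffun (Set.Icc (-1:ℝ) 1) := by
  apply ContinuousOn.div continuousOn_const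
  · exact (Real.continuous_sqrt.comp (by unfold kk; fun_prop)).continuousOn
  · intro u hu
    exact (Real.sqrt_pos.2 (kk_pos hu.1)).ne'

lemma outer_integrable {ε : ℝ} (hε : ε ∈ Set.Icc (0:ℝ) 1) :
    IntegrableOn
      (fun u => ∫ v in {v : ℝ | 0 < Qfun u v (wPlane u v ε)},
        1 / Real.sqrt (Qfun u v (wPlane u v ε)))
      (Set.Icc (-1 : ℝ) 1) := by
  rw [integrableOn_Icc_iff_integrableOn_Ioo]
  have hF : IntegrableOn Ffun (Set.Ioo (-1:ℝ) 1) :=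
    (Ffun_contOn.integrableOn_Icc).mono_set Set.Ioo_subset_Icc_self
  exact hF.congr_fun (fun u hu => (inner_value hu hε).symm) measurableSet_Ioo

lemma dos_eq {ε : ℝ} (hε : ε ∈ Set.Icc (0:ℝ) 1) :
    dosIntegral ε = ∫ u in Set.Ioo (-1:ℝ) 1, Ffun u := by
  unfold dosIntegral
  rw [integral_Icc_eq_integral_Ioo]
  exact setIntegral_congr_fun measurableSet_Ioo (fun u hu => inner_value hu hε)

/-- for the standard couplings, `I(ε)` is finite (the inner and outer integrands
are integrable) and takes the same value for all `ε ∈ [0,1]`: the density of states has a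
plateau on `[0,1]`. -/
theorem dos_plateau :
    (∀ ε ∈ Set.Icc (0 : ℝ) 1,
      (∀ u ∈ Set.Icc (-1 : ℝ) 1,
        IntegrableOn (fun v => 1 / Real.sqrt (Qfun u v (wPlane u v ε)))
          {v : ℝ | 0 < Qfun u v (wPlane u v ε)}) ∧
      IntegrableOn
        (fun u => ∫ v in {v : ℝ | 0 < Qfun u v (wPlane u v ε)},
          1 / Real.sqrt (Qfun u v (wPlane u v ε)))
        (Set.Icc (-1 : ℝ) 1)) ∧
    (∀ ε₁ ∈ Set.Icc (0 : ℝ) 1, ∀ ε₂ ∈ Set.Icc (0 : ℝ) 1,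
      dosIntegral ε₁ = dosIntegral ε₂) := by
  refine ⟨fun ε hε => ⟨fun u hu => inner_integrable hu ε, outer_integrable hε⟩,
    fun ε₁ h₁ ε₂ h₂ => ?_⟩
  rw [dos_eq h₁, dos_eq h₂]
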